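/- The odd power sums p_1, p_3, p_5, ..., p_{2g-1} are algebraically independent over Q in the polynomial ring Q[x_1, ..., x_g]; that is, if F in Q[T_1, ..., T_g] satisfies F(p_1, p_3, ..., p_{2g-1}) = 0 in Q[x_1, ..., x_g], then F = 0. -/
import Mathlib

open MvPolynomial Finsupp

variable {σ : Type*} [Fintype σ] [DecidableEq σ]

/-- chain rule -/
lemma my_pderiv_aeval (f : σ → MvPolynomial σ ℚ) (F : MvPolynomial σ ℚ) (i : σ) :
    pderiv i (aeval f F) = ∑ j, aeval f (pderiv j F) * pderiv i (f j) := by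
  induction F using MvPolynomial.induction_on with
  | C a => simp
  | add p q hp hq => simp only [map_add, hp, hq, Finset.sum_add_distrib, add_mul]
  | mul_X p j hp =>
    rw [map_mul, aeval_X, pderiv_mul, hp]
    have h1 : ∀ k : σ, aeval f (pderiv k (p * X j)) * pderiv i (f k)
        = (aeval f (pderiv k p) * pderiv i (f k)) * f j
          + (if j = k then aeval f p * pderiv i (f k) else 0) := by
      intro k
      rw [pderiv_mul, map_add, map_mul, map_mul, aeval_X]
      rw [pderiv_X]
      rw [Pi.single_apply]
      split_ifs with h
      · subst h; rw [map_one, mul_one]; ring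
      · rw [map_zero, mul_zero, add_zero, add_zero]; ring
    rw [Finset.sum_congr rfl fun k _ => h1 k]
    rw [Finset.sum_add_distrib, ← Finset.sum_mul, Finset.sum_ite_eq]
    simp [mul_comm]

lemma my_pderiv_psum (i : σ) (n : ℕ) :
    pderiv i (psum σ ℚ n) = (n : MvPolynomial σ ℚ) * X i ^ (n - 1) := by
  rw [psum, map_sum]
  have h : ∀ k ∈ Finset.univ, pderiv i (X k ^ n : MvPolynomial σ ℚ)
      = if k = i then (n : MvPolynomial σ ℚ) * X i ^ (n - 1) else 0 := by
    intro k _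
    rw [pderiv_pow]
    rcases eq_or_ne k i with rfl | hk
    · simp
    · simp [hk]
  rw [Finset.sum_congr rfl h, Finset.sum_ite_eq' Finset.univ i, if_pos (Finset.mem_univ i)]

lemma my_coeff_pderiv (i : σ) (m : σ →₀ ℕ) (f : MvPolynomial σ ℚ) :
    coeff m (pderiv i f) = (m i + 1 : ℚ) * coeff (m + Finsupp.single i 1) f := by
  conv_lhs => rw [f.as_sum]
  rw [map_sum, coeff_sum]
  simp only [pderiv_monomial, coeff_monomial]
  rw [Finset.sum_eq_single (m + Finsupp.single i 1)]
  · rw [if_pos (add_tsub_cancel_right (a := m) (b := Finsupp.single i 1))]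
    simp [mul_comm]
  · intro s hs hne
    split_ifs with h
    · rcases eq_or_ne (s i) 0 with h0 | h0
      · rw [h0]; simp
      · exfalso
        apply hne
        have hle : Finsupp.single i 1 ≤ s := by
          rw [Finsupp.single_le_iff]; omega
        rw [← h, tsub_add_cancel_of_le hle]
    · rfl
  · intro h
    rw [MvPolynomial.notMem_support_iff.mp h,
      if_pos (add_tsub_cancel_right (a := m) (b := Finsupp.single i 1))]
    simp

lemma my_totalDegree_pderiv_le (i : σ) (f : MvPolynomial σ ℚ) (n : ℕ)
    (h : f.totalDegree ≤ n + 1) : (pderiv i f).totalDegree ≤ n := by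
  conv_lhs => rw [f.as_sum, map_sum]
  refine (totalDegree_finset_sum _ _).trans (Finset.sup_le fun s hs => ?_)
  rw [pderiv_monomial]
  rcases eq_or_ne (s i) 0 with h0 | h0
  · simp [h0]
  · refine (totalDegree_monomial_le _ _).trans ?_
    have hle : Finsupp.single i 1 ≤ s := by rw [Finsupp.single_le_iff]; omega
    have hsum : ((s - Finsupp.single i 1).sum fun _ e => e) + 1
        = s.sum fun _ e => e := by
      conv_rhs => rw [← tsub_add_cancel_of_le hle]
      rw [Finsupp.sum_add_index' (fun _ => rfl) (fun _ _ _ => rfl),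
        Finsupp.sum_single_index rfl]
    have hs' : (s.sum fun _ e => e) ≤ n + 1 := (le_totalDegree hs).trans h
    show ((s - Finsupp.single i 1).sum fun _ e => e) ≤ n
    omega

lemma my_const_of_pderiv (f : MvPolynomial σ ℚ) (h : ∀ i, pderiv i f = 0) :
    f.totalDegree = 0 := by
  rw [totalDegree_eq_zero_iff]
  intro m hm j
  by_contra hj
  have hle : Finsupp.single j 1 ≤ m := by rw [Finsupp.single_le_iff]; omega
  have hc := my_coeff_pderiv j (m - Finsupp.single j 1) f
  rw [h j, tsub_add_cancel_of_le hle, coeff_zero] at hc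
  have hne : ∀ k : ℕ, ((k : ℚ) + 1) ≠ 0 := fun k => by positivity
  have : coeff m f = 0 := by
    rcases mul_eq_zero.mp hc.symm with h' | h'
    · exact absurd h' (hne _)
    · exact h'
  exact (MvPolynomial.mem_support_iff.mp hm) this

lemma my_eq_C (f : MvPolynomial σ ℚ) (h : f.totalDegree = 0) : f = C (coeff 0 f) := by
  ext m
  rcases eq_or_ne m 0 with rfl | hm
  · simp
  · rw [coeff_C, if_neg (Ne.symm hm)]
    by_contra hc
    obtain ⟨x, hx⟩ : ∃ x, m x ≠ 0 := by
      by_contra h'; push_neg at h'; exact hm (Finsupp.ext h')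
    exact hx ((totalDegree_eq_zero_iff σ f).mp h m (MvPolynomial.mem_support_iff.mpr hc) x)

theorem odd_power_sums_algebraically_independent (g : ℕ) (hg : 0 < g)
    (F : MvPolynomial (Fin g) ℚ)
    (hF : aeval (fun j : Fin g => psum (Fin g) ℚ (2 * (j : ℕ) + 1)) F = 0) :
    F = 0 := by
  set P : Fin g → MvPolynomial (Fin g) ℚ :=
    fun j => psum (Fin g) ℚ (2 * (j : ℕ) + 1) with hP
  set M : Matrix (Fin g) (Fin g) (MvPolynomial (Fin g) ℚ) :=
    Matrix.of fun i j => ((2 * (j : ℕ) + 1 : ℕ) : MvPolynomial (Fin g) ℚ)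
      * (X i ^ 2) ^ (j : ℕ) with hM
  have hdet : M.det ≠ 0 := by
    have hMeq : M = (Matrix.vandermonde fun i : Fin g =>
          (X i : MvPolynomial (Fin g) ℚ) ^ 2)
        * Matrix.diagonal (fun j : Fin g =>
          ((2 * (j : ℕ) + 1 : ℕ) : MvPolynomial (Fin g) ℚ)) := by
      ext i j
      rw [Matrix.mul_diagonal]
      simp [hM, Matrix.vandermonde]
      ring
    rw [hMeq, Matrix.det_mul, Matrix.det_vandermonde, Matrix.det_diagonal]
    apply mul_ne_zero
    · rw [Finset.prod_ne_zero_iff]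
      intro i _
      rw [Finset.prod_ne_zero_iff]
      intro j hj
      have hij : i ≠ j := ne_of_lt (Finset.mem_Ioi.mp hj)
      refine sub_ne_zero.mpr ?_
      rw [X_pow_eq_monomial, X_pow_eq_monomial, Ne, monomial_eq_monomial_iff]
      simp [Finsupp.single_eq_single_iff, hij.symm]
    · rw [Finset.prod_ne_zero_iff]
      intro j _
      rw [show ((2 * (j : ℕ) + 1 : ℕ) : MvPolynomial (Fin g) ℚ)
          = C ((2 * (j : ℕ) + 1 : ℕ) : ℚ) from (map_natCast C _).symm, Ne, C_eq_zero]
      exact Nat.cast_ne_zero.mpr (by omega)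
  have key : ∀ F : MvPolynomial (Fin g) ℚ, aeval P F = 0 →
      ∀ j, aeval P (pderiv j F) = 0 := by
    intro F hF
    have hmv : Matrix.mulVec M (fun j => aeval P (pderiv j F)) = 0 := by
      funext i
      have h0 := congrArg (pderiv i) hF
      rw [my_pderiv_aeval, map_zero] at h0
      have hPd : ∀ j : Fin g, pderiv i (P j)
          = ((2 * (j : ℕ) + 1 : ℕ) : MvPolynomial (Fin g) ℚ) * (X i ^ 2) ^ (j : ℕ) := by
        intro j
        have he : 2 * (j : ℕ) + 1 - 1 = 2 * (j : ℕ) := rfl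
        rw [hP, my_pderiv_psum, he, pow_mul]
      simp only [Matrix.mulVec, dotProduct, Pi.zero_apply, hM, Matrix.of_apply]
      rw [← h0]
      apply Finset.sum_congr rfl
      intro j _
      rw [hPd j]
      ring
    have := Matrix.eq_zero_of_mulVec_eq_zero hdet hmv
    exact fun j => congrFun this j
  have base : ∀ F : MvPolynomial (Fin g) ℚ, F.totalDegree = 0 → aeval P F = 0 → F = 0 := by
    intro F h0 hF
    have h1 : algebraMap ℚ (MvPolynomial (Fin g) ℚ) (coeff 0 F) = 0 := by
      rw [my_eq_C F h0] at hF
      rwa [aeval_C] at hF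
    have h2 : coeff 0 F = 0 := by simpa [algebraMap_eq] using h1
    rw [my_eq_C F h0, h2, map_zero]
  have main : ∀ (n : ℕ) (F : MvPolynomial (Fin g) ℚ),
      F.totalDegree ≤ n → aeval P F = 0 → F = 0 := by
    intro n
    induction n with
    | zero => exact fun F h0 hF => base F (Nat.le_zero.mp h0) hF
    | succ n ih =>
      intro F hdeg hF
      have hz : ∀ j, pderiv j F = 0 :=
        fun j => ih _ (my_totalDegree_pderiv_le j F n hdeg) (key F hF j)
      exact base F (my_const_of_pderiv F hz) hF
  exact main F.totalDegree F le_rfl hF
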